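/- Let a_0, a_1, b be nonzero complex numbers and define a_n = b · a_{n−1} a_{n−2} for n ≥ 2. Then a_n → 0 if and only if φ·log|b| + φ^{−1}·log|a_0| + log|a_1| < 0, where φ is the golden ratio. -/

import Mathlib

open Filter Real

theorem stmt_11 (a : ℕ → ℂ) (b : ℂ) (hb : b ≠ 0) (h0 : a 0 ≠ 0) (h1 : a 1 ≠ 0)
    (hrec : ∀ n ≥ 2, a n = b * (a (n - 1) * a (n - 2)))
    (φ : ℝ) (hφ : φ = (1 + Real.sqrt 5) / 2) :
    Filter.Tendsto a Filter.atTop (nhds 0) ↔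
      φ * Real.log (‖b‖) + φ⁻¹ * Real.log (‖a 0‖) +
        Real.log (‖a 1‖) < 0 := by
  have hgold : φ = goldenRatio := by rw [hφ]
  subst hgold
  set A := Real.log (‖b‖) with hA
  set B := Real.log (‖a 0‖) with hB
  set C := Real.log (‖a 1‖) with hC
  set c := goldenRatio * A + goldenRatio⁻¹ * B + C with hc
  -- all terms nonzero
  have ha : ∀ n, a n ≠ 0 ∧ a (n + 1) ≠ 0 := by
    intro n
    induction n with
    | zero => exact ⟨h0, h1⟩
    | succ k ih =>
      refine ⟨ih.2, ?_⟩
      have h := hrec (k + 2) (by omega)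
      have e1 : k + 2 - 1 = k + 1 := by omega
      have e2 : k + 2 - 2 = k := by omega
      rw [e1, e2] at h
      rw [h]
      exact mul_ne_zero hb (mul_ne_zero ih.2 ih.1)
  set r : ℕ → ℝ := fun n => Real.log (‖a n‖) with hrdef
  have habs_pos : ∀ n, 0 < ‖a n‖ := fun n =>
    (norm_pos_iff.mpr (ha n).1)
  have hr : ∀ n, r (n + 2) = A + (r (n + 1) + r n) := by
    intro n
    have h := hrec (n + 2) (by omega)
    have e1 : n + 2 - 1 = n + 1 := by omega
    have e2 : n + 2 - 2 = n := by omega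
    rw [e1, e2] at h
    simp only [hrdef, h, norm_mul]
    rw [Real.log_mul (norm_ne_zero_iff.mpr hb)
      (mul_pos (habs_pos (n+1)) (habs_pos n)).ne',
      Real.log_mul (ne_of_gt (habs_pos (n+1))) (ne_of_gt (habs_pos n))]
  have habspsi : |goldenConj| < 1 := by
    rw [abs_lt]
    exact ⟨neg_one_lt_goldenConj, lt_trans goldenConj_neg one_pos⟩
  -- closed formula
  have key : ∀ n, r n = c * (Nat.fib n : ℝ) + (A + B) * goldenConj ^ n - A := by
    have key2 : ∀ n, (r n = c * (Nat.fib n : ℝ) + (A + B) * goldenConj ^ n - A) ∧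
        (r (n+1) = c * (Nat.fib (n+1) : ℝ) + (A + B) * goldenConj ^ (n+1) - A) := by
      intro n
      induction n with
      | zero =>
        constructor
        · simp [hrdef, hB]
        · have h1' : r 1 = C := rfl
          rw [h1', hc, inv_goldenRatio]
          push_cast [Nat.fib_one]
          linear_combination A * goldenRatio_add_goldenConj
      | succ k ih =>
        refine ⟨ih.2, ?_⟩
        have hfib : (Nat.fib (k + 2) : ℝ) = (Nat.fib (k+1) : ℝ) + (Nat.fib k : ℝ) := by
          rw [Nat.fib_add_two]; push_cast; ring
        have hpow : goldenConj ^ (k + 2) = goldenConj ^ (k+1) + goldenConj ^ k := by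
          have h2 : goldenConj ^ (k+2) = goldenConj ^ k * goldenConj ^ 2 := by ring
          rw [h2, goldenConj_sq]; ring
        rw [hr k, ih.1, ih.2, hfib, hpow]
        ring
    exact fun n => (key2 n).1
  -- r tends to -infinity iff c < 0
  have hpsi0 : Tendsto (fun n : ℕ => goldenConj ^ n) atTop (nhds 0) :=
    tendsto_pow_atTop_nhds_zero_of_abs_lt_one habspsi
  have hfibtop : Tendsto (fun n : ℕ => (Nat.fib n : ℝ)) atTop atTop := by
    apply tendsto_natCast_atTop_atTop.comp
    exact tendsto_atTop_mono' atTop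
      (eventually_atTop.2 ⟨5, fun n hn => Nat.le_fib_self hn⟩) tendsto_id
  have hrbot : Tendsto r atTop atBot ↔ c < 0 := by
    constructor
    · intro h
      by_contra hcge
      push_neg at hcge
      have hlb : ∀ n, -|A + B| - A ≤ r n := by
        intro n
        rw [key n]
        have h1 : 0 ≤ c * (Nat.fib n : ℝ) := mul_nonneg hcge (Nat.cast_nonneg _)
        have h2 : |(A + B) * goldenConj ^ n| ≤ |A + B| := by
          rw [abs_mul]
          apply mul_le_of_le_one_right (abs_nonneg _)
          rw [abs_pow]
          exact pow_le_one₀ (abs_nonneg _) habspsi.le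
        have h3 := neg_abs_le ((A + B) * goldenConj ^ n)
        linarith
      obtain ⟨n, hn⟩ := (tendsto_atBot.1 h (-|A + B| - A - 1)).exists
      linarith [hlb n]
    · intro hcneg
      have h1 : Tendsto (fun n : ℕ => c * (Nat.fib n : ℝ)) atTop atBot :=
        (tendsto_const_mul_atBot_of_neg hcneg).2 hfibtop
      have h2 : Tendsto (fun n : ℕ => (A + B) * goldenConj ^ n - A) atTop (nhds ((A + B) * 0 - A)) :=
        (hpsi0.const_mul _).sub_const A
      have h3 : Tendsto (fun n : ℕ => c * (Nat.fib n : ℝ) + ((A + B) * goldenConj ^ n - A))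
          atTop atBot := by
        apply tendsto_atBot_add_right_of_ge' atTop ((A + B) * 0 - A + 1) h1
        have hlt : (A + B) * 0 - A < (A + B) * 0 - A + 1 := by linarith
        filter_upwards [h2.eventually (eventually_le_nhds hlt)] with n hn
        exact hn
      refine h3.congr fun n => ?_
      rw [key n]; ring
  -- main equivalence
  rw [show (goldenRatio * A + goldenRatio⁻¹ * B + C < 0) = (c < 0) from rfl, ← hrbot]
  constructor
  · intro h
    have habs : Tendsto (fun n => ‖a n‖) atTop (nhds 0) := by
      have := (continuous_norm.tendsto 0).comp h
      exact tendsto_zero_iff_norm_tendsto_zero.1 h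
    have hin : Tendsto (fun n => ‖a n‖) atTop (nhdsWithin 0 (Set.Ioi 0)) :=
      tendsto_nhdsWithin_iff.2 ⟨habs, Eventually.of_forall fun n => habs_pos n⟩
    exact Real.tendsto_log_nhdsGT_zero.comp hin
  · intro h
    have hexp : Tendsto (fun n => Real.exp (r n)) atTop (nhds 0) :=
      Real.tendsto_exp_atBot.comp h
    have habs : Tendsto (fun n => ‖a n‖) atTop (nhds 0) := by
      refine hexp.congr fun n => ?_
      exact Real.exp_log (habs_pos n)
    rw [tendsto_zero_iff_norm_tendsto_zero]
    simpa using habs
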